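/- The loop power sum symmetric functions p_k(x_1,...,x_m) = Σ_{i=1}^m π_i^k = Σ_{i=1}^m (∏_{j=1}^n x_i^{(j)})^k are invariant under each birational map s_i, hence under the full birational S_m action. -/

import Mathlib

open Finset

/-- Multiplication of (upper-triangular) N-by-N matrices: for upper triangular
matrices this agrees with true matrix multiplication. -/
def utMul {K : Type*} [Field K] (A B : Matrix ℕ ℕ K) : Matrix ℕ ℕ K :=
  Matrix.of fun i j => ∑ t ∈ Finset.Icc i j, A i t * B t j

/-- The identity infinite matrix. -/
def oneM {K : Type*} [Field K] : Matrix ℕ ℕ K := Matrix.of fun i j => if i = j then 1 else 0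

/-- Checkerboard conjugate `A^c` of an infinite matrix. -/
def chkInf {K : Type*} [Field K] (A : Matrix ℕ ℕ K) : Matrix ℕ ℕ K :=
  Matrix.of fun i j => (-1 : K) ^ (i + j) * A i j

/-- The whirl `M(a_1, …, a_n)`: upper bitriangular with 1's on the diagonal and
`a_i` (index mod `n`) on the superdiagonal. -/
def whirl {K : Type*} [Field K] (n : ℕ) (a : ZMod n → K) : Matrix ℕ ℕ K :=
  Matrix.of fun i j => if j = i then 1 else if j = i + 1 then a (i : ZMod n) else 0

/-- `κ^{(r)}(x,y) = Σ_{j=0}^{n-1} y^{(r+1)}⋯y^{(r+j)} x^{(r+j+1)}⋯x^{(r+n-1)}`. -/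
def kappa {K : Type*} [Field K] (n : ℕ) (xx yy : ZMod n → K) (r : ZMod n) : K :=
  ∑ j ∈ Finset.range n,
    (∏ t ∈ Finset.Icc 1 j, yy (r + (t : ZMod n))) *
      ∏ t ∈ Finset.Icc (j + 1) (n - 1), xx (r + (t : ZMod n))

/-- Loop elementary symmetric function
`e_k^{(r)} = Σ_{i_1 < ⋯ < i_k} x_{i_1}^{(r)} x_{i_2}^{(r+1)} ⋯ x_{i_k}^{(r+k-1)}`. -/
def loopE {K : Type*} [Field K] (m n : ℕ) (x : Fin m → ZMod n → K) (k : ℕ) (r : ZMod n) : K :=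
  ∑ f ∈ Finset.univ.filter (fun f : Fin k → Fin m => ∀ a b : Fin k, a < b → f a < f b),
    ∏ t : Fin k, x (f t) (r + ((t : ℕ) : ZMod n))

/-- Loop homogeneous symmetric function
`h_k^{(r)} = Σ_{i_k ≥ ⋯ ≥ i_1} x_{i_k}^{(r)} x_{i_{k-1}}^{(r+1)} ⋯ x_{i_1}^{(r+k-1)}`,
encoded via the weakly increasing sequence `f = (i_1, …, i_k)`. -/
def loopH {K : Type*} [Field K] (m n : ℕ) (x : Fin m → ZMod n → K) (k : ℕ) (r : ZMod n) : K :=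
  ∑ f ∈ Finset.univ.filter (fun f : Fin k → Fin m => ∀ a b : Fin k, a ≤ b → f a ≤ f b),
    ∏ t : Fin k, x (f t) (r + ((k - 1 - (t : ℕ) : ℕ) : ZMod n))

/-- Loop homogeneous symmetric function with integer index, `0` for negative index. -/
noncomputable def loopHZ {K : Type*} [Field K] (m n : ℕ) (x : Fin m → ZMod n → K)
    (k : ℤ) (r : ZMod n) : K :=
  if k < 0 then 0 else loopH m n x k.toNat r

/-- Single-block loop homogeneous function `h_a^{(b)}(y) = y^{(b+a-1)} y^{(b+a-2)} ⋯ y^{(b)}`. -/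
def singleH {K : Type*} [Field K] (n : ℕ) (y : ZMod n → K) (a : ℕ) (b : ZMod n) : K :=
  ∏ s ∈ Finset.range a, y (b + (s : ZMod n))

/-- `π = y^{(1)} y^{(2)} ⋯ y^{(n)}`, the product over all colors of one block. -/
def pivar {K : Type*} [Field K] (n : ℕ) [NeZero n] (y : ZMod n → K) : K := ∏ j : ZMod n, y j

/-- The loop power sums `p_k = Σ_i π_i^k` are invariant under each birational map `s_i`,
hence under any composition of them (the full birational `S_m` action). -/
theorem statement13 {K : Type*} [Field K] (m n : ℕ) [NeZero n] (k : ℕ) (hk : 1 ≤ k)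
    (x : Fin m → ZMod n → K)
    (σ : (l : Fin m) → ((l : ℕ) + 1 < m) → (K →+* K))
    (hκ : ∀ (l : Fin m) (hl : (l : ℕ) + 1 < m) (r : ZMod n),
      kappa n (x l) (x ⟨(l : ℕ) + 1, hl⟩) r ≠ 0)
    (h1 : ∀ (l : Fin m) (hl : (l : ℕ) + 1 < m) (j : ZMod n),
      σ l hl (x l j) =
        x ⟨(l : ℕ) + 1, hl⟩ (j + 1) * kappa n (x l) (x ⟨(l : ℕ) + 1, hl⟩) (j + 1) /
          kappa n (x l) (x ⟨(l : ℕ) + 1, hl⟩) j)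
    (h2 : ∀ (l : Fin m) (hl : (l : ℕ) + 1 < m) (j : ZMod n),
      σ l hl (x ⟨(l : ℕ) + 1, hl⟩ j) =
        x l (j - 1) * kappa n (x l) (x ⟨(l : ℕ) + 1, hl⟩) (j - 1) /
          kappa n (x l) (x ⟨(l : ℕ) + 1, hl⟩) j)
    (h3 : ∀ (l : Fin m) (hl : (l : ℕ) + 1 < m) (kk : Fin m) (j : ZMod n),
      kk ≠ l → kk ≠ ⟨(l : ℕ) + 1, hl⟩ → σ l hl (x kk j) = x kk j) :
    (∀ (l : Fin m) (hl : (l : ℕ) + 1 < m),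
      σ l hl (∑ i : Fin m, pivar n (x i) ^ k) = ∑ i : Fin m, pivar n (x i) ^ k) ∧
    ∀ L : List {l : Fin m // (l : ℕ) + 1 < m},
      (L.foldr (fun l f => (σ l.1 l.2).comp f) (RingHom.id K))
          (∑ i : Fin m, pivar n (x i) ^ k) = ∑ i : Fin m, pivar n (x i) ^ k := by

  have hmain : ∀ (l : Fin m) (hl : (l : ℕ) + 1 < m),
      σ l hl (∑ i : Fin m, pivar n (x i) ^ k) = ∑ i : Fin m, pivar n (x i) ^ k := by
    intro l hl
    set l' : Fin m := ⟨(l : ℕ) + 1, hl⟩ with hl'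
    have hne : l ≠ l' := by
      intro h
      have := congrArg Fin.val h
      simp [hl'] at this
    have hκprod : (∏ j : ZMod n, kappa n (x l) (x l') j) ≠ 0 :=
      Finset.prod_ne_zero_iff.mpr fun j _ => hκ l hl j
    have key : ∀ i : Fin m, σ l hl (pivar n (x i)) = pivar n (x (Equiv.swap l l' i)) := by
      intro i
      rcases eq_or_ne i l with rfl | hil
      · rw [Equiv.swap_apply_left]
        rw [pivar, map_prod]
        simp only [h1 i hl]
        rw [Finset.prod_div_distrib, Finset.prod_mul_distrib]
        have e1 : (∏ j : ZMod n, kappa n (x i) (x l') (j + 1))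
            = ∏ j : ZMod n, kappa n (x i) (x l') j :=
          Fintype.prod_equiv (Equiv.addRight (1 : ZMod n)) _ _ (fun j => rfl)
        have e2 : (∏ j : ZMod n, x l' (j + 1)) = ∏ j : ZMod n, x l' j :=
          Fintype.prod_equiv (Equiv.addRight (1 : ZMod n)) _ _ (fun j => rfl)
        rw [e1, e2, mul_div_assoc, div_self hκprod, mul_one, pivar]
      · rcases eq_or_ne i l' with rfl | hil'
        · rw [Equiv.swap_apply_right]
          rw [pivar, map_prod]
          rw [Finset.prod_congr rfl fun j _ => h2 l hl j]
          rw [Finset.prod_div_distrib, Finset.prod_mul_distrib]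
          have e1 : (∏ j : ZMod n, kappa n (x l) (x l') (j - 1))
              = ∏ j : ZMod n, kappa n (x l) (x l') j :=
            Fintype.prod_equiv (Equiv.subRight (1 : ZMod n)) _ _ (fun j => rfl)
          have e2 : (∏ j : ZMod n, x l (j - 1)) = ∏ j : ZMod n, x l j :=
            Fintype.prod_equiv (Equiv.subRight (1 : ZMod n)) _ _ (fun j => rfl)
          rw [e1, e2, mul_div_assoc, div_self hκprod, mul_one, pivar]
        · rw [Equiv.swap_apply_of_ne_of_ne hil hil']
          rw [pivar, map_prod]
          exact Finset.prod_congr rfl fun j _ => h3 l hl i j hil hil'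
    rw [map_sum]
    calc (∑ i : Fin m, σ l hl (pivar n (x i) ^ k))
        = ∑ i : Fin m, pivar n (x (Equiv.swap l l' i)) ^ k := by
          refine Finset.sum_congr rfl fun i _ => ?_
          rw [map_pow, key i]
      _ = ∑ i : Fin m, pivar n (x i) ^ k :=
          Equiv.sum_comp (Equiv.swap l l') (fun i => pivar n (x i) ^ k)
  refine ⟨hmain, ?_⟩
  intro L
  induction L with
  | nil => simp
  | cons a L ih =>
    simp only [List.foldr_cons, RingHom.comp_apply, ih]
    exact hmain a.1 a.2
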